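/- arXiv:0904.4370 — 2 statements merged into one kernel-verified Lean document; each statement's English description precedes it below -/
import Mathlib

section
/- Let f be an expanding map on [0,1) generating a full shift on g symbols, with bounded distortion such that each child cylinder has length at least 1/(gK) times its parent's length. Then for every set A ⊆ [0,1), the net outer measure using dyadic intervals satisfies M^s_∞(A) ≥ (1/(2gK)) · N^s_∞(A), where N^s_∞ is the analogous outer measure using covers by cylinders of f. -/
open Set MeasureTheory Filter
open scoped ENNReal Classical

noncomputable section

/-- A similarity transformation of `ℝ`. -/
def IsSimilarity (f : ℝ → ℝ) : Prop := ∃ a b : ℝ, a ≠ 0 ∧ ∀ x, f x = a * x + b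

/-- Falconer's class `𝒢^s`: Gδ sets all of whose images under countably many
similarities intersect in a set of Hausdorff dimension at least `s`. -/
def falconerClass (s : ℝ) : Set (Set ℝ) :=
  {F | IsGδ F ∧ ∀ T : ℕ → ℝ → ℝ, (∀ i, IsSimilarity (T i)) →
    ENNReal.ofReal s ≤ dimH (⋂ i, T i '' F)}

/-- A probability vector indexed by a finite type. -/
def IsProbVector {ι : Type*} [Fintype ι] (p : ι → ℝ) : Prop :=
  (∀ i, 0 ≤ p i) ∧ ∑ i, p i = 1

/-- A dyadic half-open interval `[2^k m, 2^k (m+1))`. -/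
def IsDyadic (I : Set ℝ) : Prop :=
  ∃ (k m : ℤ), I = Ico ((2:ℝ) ^ k * m) ((2:ℝ) ^ k * (m + 1))

/-- The outer measure `M^s_∞` obtained from countable covers by dyadic intervals. -/
def dyadicMeasure (s : ℝ) (A : Set ℝ) : ℝ≥0∞ :=
  ⨅ (I : ℕ → Set ℝ) (_ : ∀ i, IsDyadic (I i)) (_ : A ⊆ ⋃ i, I i),
    ∑' i, volume (I i) ^ s

/-- Extension of a subset of `[0,1)` to `ℝ` by integer translations. -/
def periodize (A : Set ℝ) : Set ℝ := ⋃ k : ℤ, (fun x => x + (k : ℝ)) '' A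

/-- An expanding interval map on `[0,1)` with `g` full monotone branches,
generating a full shift on `g` symbols. -/
structure ExpandingFullShift where
  g : ℕ
  one_lt_g : 1 < g
  branch : Fin g → Set ℝ
  branch_Ico : ∀ i, ∃ a b : ℝ, a < b ∧ branch i = Ico a b
  branch_cover : (⋃ i, branch i) = Ico (0:ℝ) 1
  branch_disjoint : ∀ i j, i ≠ j → Disjoint (branch i) (branch j)
  f : ℝ → ℝ
  f_onto : ∀ i, f '' branch i = Ico (0:ℝ) 1
  f_mono : ∀ i, StrictMonoOn f (branch i) ∨ StrictAntiOn f (branch i)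
  f_expanding : ∀ i, ∀ x ∈ branch i, ∀ y ∈ branch i, |x - y| ≤ |f x - f y|

namespace ExpandingFullShift

variable (E : ExpandingFullShift)

/-- The symbol `0`. -/
def zeroSym : Fin E.g := ⟨0, Nat.lt_trans Nat.one_pos E.one_lt_g⟩

/-- The cylinder `C_{x₁ … x_n} ⊆ [0,1)` determined by a word `w`. -/
def cylinder (w : List (Fin E.g)) : Set ℝ :=
  {x ∈ Ico (0:ℝ) 1 | ∀ k (hk : k < w.length), E.f^[k] x ∈ E.branch (w.get ⟨k, hk⟩)}

/-- A cylinder in some interval `[k, k+1)`, `k ∈ ℤ` (periodic extension of the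
cylinder structure to `ℝ`). -/
def IsCylinderZ (C : Set ℝ) : Prop :=
  ∃ (w : List (Fin E.g)) (k : ℤ), C = (fun x => x + (k : ℝ)) '' E.cylinder w

/-- The outer measure `N^s_∞` obtained from countable covers by cylinders of `E`. -/
def cylMeasure (s : ℝ) (A : Set ℝ) : ℝ≥0∞ :=
  ⨅ (c : ℕ → List (Fin E.g)) (_ : A ⊆ ⋃ i, E.cylinder (c i)),
    ∑' i, volume (E.cylinder (c i)) ^ s

/-- The outer measure `N^s_∞` from covers by cylinders of the periodic extension. -/
def cylMeasureZ (s : ℝ) (A : Set ℝ) : ℝ≥0∞ :=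
  ⨅ (c : ℕ → Set ℝ) (_ : ∀ i, E.IsCylinderZ (c i)) (_ : A ⊆ ⋃ i, c i),
    ∑' i, volume (c i) ^ s

/-- The empirical frequency `τ^f_w(x,n)/(n-m)` of the word `w` (of length `m`)
in the first `n` symbols of the expansion of `x`. -/
def freq {m : ℕ} (w : Fin m → Fin E.g) (x : ℝ) (n : ℕ) : ℝ :=
  (((Finset.range (n - m)).filter
      (fun i => ∀ k : Fin m, E.f^[i + k] x ∈ E.branch (w k))).card : ℝ) / ((n - m : ℕ) : ℝ)

/-- `G^{f,m}_{p̄}`: the set of points whose length-`m` word frequencies converge to `p̄`. -/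
def Gset (m : ℕ) (p : (Fin m → Fin E.g) → ℝ) : Set ℝ :=
  {x ∈ Ico (0:ℝ) 1 | ∀ w : Fin m → Fin E.g,
    Tendsto (fun n => E.freq w x n) atTop (nhds (p w))}

/-- `G^{f,m}_{p̄}(n,ε)`: points whose empirical length-`m` word frequencies at time `n`
are within `ε` of `p̄` componentwise. -/
def GsetApprox (m : ℕ) (p : (Fin m → Fin E.g) → ℝ) (n : ℕ) (ε : ℝ) : Set ℝ :=
  {x ∈ Ico (0:ℝ) 1 | ∀ w : Fin m → Fin E.g, |E.freq w x n - p w| < ε}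

/-- `p̄ ∈ A^{f,m}(x)`: the vector `p̄` is an accumulation point of the empirical
frequency vectors of `x` as `n → ∞`. -/
def IsFreqAccum (m : ℕ) (p : (Fin m → Fin E.g) → ℝ) (x : ℝ) : Prop :=
  MapClusterPt p atTop (fun n => fun w => E.freq w x n)

/-- `x` is `m`-normal to `f`: every length-`m` word occurs with frequency equal to
the length of the corresponding cylinder. -/
def IsNormal (m : ℕ) (x : ℝ) : Prop :=
  ∀ w : Fin m → Fin E.g,
    Tendsto (fun n => E.freq w x n) atTop (nhds (volume (E.cylinder (List.ofFn w))).toReal)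

/-- Bounded distortion with constant `K`:
`|C_u||C_v|/K ≤ |C_{uv}| ≤ K |C_u||C_v|` for all words `u, v`. -/
def HasBoundedDistortion (K : ℝ) : Prop :=
  ∀ u v : List (Fin E.g),
    volume (E.cylinder (u ++ v)) ≤
      ENNReal.ofReal K * (volume (E.cylinder u) * volume (E.cylinder v)) ∧
    volume (E.cylinder u) * volume (E.cylinder v) ≤
      ENNReal.ofReal K * volume (E.cylinder (u ++ v))

/-- Condition (ii): for each `m` there is `p̄` with `dim_H G^{f,m}_{p̄} = 1`, and for
each word `w` of length `m` there are vectors `q̄` with `q_w ≠ p_w` whose `G`-set has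
Hausdorff dimension arbitrarily close to `1`. -/
def CondII : Prop :=
  ∀ m : ℕ, 0 < m → ∃ p : (Fin m → Fin E.g) → ℝ, IsProbVector p ∧ dimH (E.Gset m p) = 1 ∧
    ∀ w : Fin m → Fin E.g, ∀ t : ℝ≥0∞, t < 1 → ∃ q : (Fin m → Fin E.g) → ℝ,
      IsProbVector q ∧ q w ≠ p w ∧ t ≤ dimH (E.Gset m q)

end ExpandingFullShift

namespace ExpandingFullShift
variable (E : ExpandingFullShift)

lemma branch_subset (i : Fin E.g) : E.branch i ⊆ Ico (0:ℝ) 1 := by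
  rw [← E.branch_cover]; exact subset_iUnion _ i

lemma maps_to' {x : ℝ} (hx : x ∈ Ico (0:ℝ) 1) : E.f x ∈ Ico (0:ℝ) 1 := by
  rw [← E.branch_cover] at hx
  obtain ⟨i, hi⟩ := mem_iUnion.1 hx
  rw [← E.f_onto i]; exact ⟨x, hi, rfl⟩

lemma iter_mem {x : ℝ} (hx : x ∈ Ico (0:ℝ) 1) (k : ℕ) : E.f^[k] x ∈ Ico (0:ℝ) 1 := by
  induction k with
  | zero => simpa
  | succ n ih => rw [Function.iterate_succ_apply']; exact E.maps_to' ih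

/-- the `k`-th symbol of the expansion of `x`. -/
def symb (x : ℝ) (k : ℕ) : Fin E.g :=
  if h : ∃ i, E.f^[k] x ∈ E.branch i then h.choose else ⟨0, Nat.lt_trans Nat.one_pos E.one_lt_g⟩

lemma symb_exists {x : ℝ} (hx : x ∈ Ico (0:ℝ) 1) (k : ℕ) : ∃ i, E.f^[k] x ∈ E.branch i := by
  have := E.iter_mem hx k; rw [← E.branch_cover] at this; exact mem_iUnion.1 this

lemma symb_eq (x : ℝ) (k : ℕ) {i : Fin E.g} (hi : E.f^[k] x ∈ E.branch i) : E.symb x k = i := by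
  have h : ∃ i, E.f^[k] x ∈ E.branch i := ⟨i, hi⟩
  rw [symb, dif_pos h]
  by_contra hne
  exact Set.disjoint_left.1 (E.branch_disjoint _ _ hne) h.choose_spec hi

lemma mem_branch_symb {x : ℝ} (hx : x ∈ Ico (0:ℝ) 1) (k : ℕ) :
    E.f^[k] x ∈ E.branch (E.symb x k) := by
  obtain ⟨i, hi⟩ := E.symb_exists hx k
  rw [E.symb_eq x k hi]; exact hi

/-- the first `n` symbols of `x`. -/
def word (x : ℝ) (n : ℕ) : List (Fin E.g) := List.ofFn (fun k : Fin n => E.symb x k)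

@[simp] lemma word_length (x : ℝ) (n : ℕ) : (E.word x n).length = n := by simp [word]

lemma mem_cylinder_word {x : ℝ} (hx : x ∈ Ico (0:ℝ) 1) (n : ℕ) :
    x ∈ E.cylinder (E.word x n) := by
  refine ⟨hx, fun k hk => ?_⟩
  have h1 : (E.word x n).get ⟨k, hk⟩ = E.symb x k := by simp [word]
  rw [h1]; exact E.mem_branch_symb hx k

lemma word_eq_of_mem {x : ℝ} {w : List (Fin E.g)} (h : x ∈ E.cylinder w) :
    w = E.word x w.length := by
  apply List.ext_get (by simp)
  intro k h1 h2
  have hs : E.symb x k = w.get ⟨k, h1⟩ := E.symb_eq x k (h.2 k h1)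
  simpa [word] using hs.symm

lemma cylinder_word_anti (x : ℝ) {m n : ℕ} (h : m ≤ n) :
    E.cylinder (E.word x n) ⊆ E.cylinder (E.word x m) := by
  intro y hy
  refine ⟨hy.1, fun k hk => ?_⟩
  have hk2 : k < n := by have := E.word_length x m ▸ hk; omega
  have hk' : k < (E.word x n).length := by simpa using hk2
  have := hy.2 k hk'
  have e1 : (E.word x n).get ⟨k, hk'⟩ = E.symb x k := by simp [word]
  have e2 : (E.word x m).get ⟨k, hk⟩ = E.symb x k := by simp [word]
  rw [e2]; rw [e1] at this; exact this

lemma word_succ (x : ℝ) (n : ℕ) : E.word x (n+1) = E.word x n ++ [E.symb x n] := by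
  rw [word, List.ofFn_succ']
  simp [word, List.concat_eq_append, Fin.last]

@[simp] lemma cylinder_nil : E.cylinder ([] : List (Fin E.g)) = Ico (0:ℝ) 1 := by
  ext x; simp [cylinder]

lemma cylinder_subset (w : List (Fin E.g)) : E.cylinder w ⊆ Ico (0:ℝ) 1 := fun _ hx => hx.1

end ExpandingFullShift
namespace ExpandingFullShift
variable (E : ExpandingFullShift)

lemma cylinder_cons (i : Fin E.g) (w : List (Fin E.g)) :
    E.cylinder (i :: w) = E.branch i ∩ E.f ⁻¹' (E.cylinder w) := by
  ext x
  constructor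
  · rintro ⟨hx, h⟩
    have h0 : x ∈ E.branch i := by simpa using h 0 (by simp)
    refine ⟨h0, E.maps_to' hx, fun k hk => ?_⟩
    have hk' : k + 1 < (i :: w).length := by simpa using Nat.succ_lt_succ hk
    have := h (k+1) hk'
    rw [Function.iterate_succ_apply] at this
    simpa using this
  · rintro ⟨hb, hf, h⟩
    refine ⟨E.branch_subset i hb, fun k hk => ?_⟩
    match k with
    | 0 => simpa using hb
    | k + 1 =>
      rw [Function.iterate_succ_apply]
      have hk2 : k < w.length := by simpa using hk
      simpa using h k hk2

lemma cylinder_ordConnected (w : List (Fin E.g)) : (E.cylinder w).OrdConnected := by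
  induction w with
  | nil => rw [cylinder_nil]; exact ordConnected_Ico
  | cons i w ih =>
    rw [cylinder_cons]
    constructor
    intro x hx y hy z hz
    obtain ⟨a, b, hab, hbr⟩ := E.branch_Ico i
    have hxb := hx.1; have hyb := hy.1
    have hzb : z ∈ E.branch i := by
      rw [hbr] at hxb hyb ⊢
      exact ⟨le_trans hxb.1 hz.1, lt_of_le_of_lt hz.2 hyb.2⟩
    refine ⟨hzb, ?_⟩
    rcases E.f_mono i with hm | hm
    · have h1 : E.f x ≤ E.f z := hm.monotoneOn hx.1 hzb hz.1
      have h2 : E.f z ≤ E.f y := hm.monotoneOn hzb hy.1 hz.2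
      exact ih.out hx.2 hy.2 ⟨h1, h2⟩
    · have h1 : E.f y ≤ E.f z := hm.antitoneOn hzb hy.1 hz.2
      have h2 : E.f z ≤ E.f x := hm.antitoneOn hx.1 hzb hz.1
      exact ih.out hy.2 hx.2 ⟨h1, h2⟩

lemma cylinder_measurable (w : List (Fin E.g)) : MeasurableSet (E.cylinder w) :=
  (E.cylinder_ordConnected w).measurableSet

lemma mem_cylinder_concat {w : List (Fin E.g)} {j : Fin E.g} {x : ℝ} :
    x ∈ E.cylinder (w ++ [j]) ↔ x ∈ E.cylinder w ∧ E.f^[w.length] x ∈ E.branch j := by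
  constructor
  · rintro ⟨hx, h⟩
    refine ⟨⟨hx, fun k hk => ?_⟩, ?_⟩
    · have hk' : k < (w ++ [j]).length := by simp; omega
      have := h k hk'
      simpa [List.getElem_append_left hk] using this
    · have hk' : w.length < (w ++ [j]).length := by simp
      have := h w.length hk'
      have e : (w ++ [j]).get ⟨w.length, hk'⟩ = j := by
        simp [List.get_eq_getElem]
      rwa [e] at this
  · rintro ⟨⟨hx, h⟩, hj⟩
    refine ⟨hx, fun k hk => ?_⟩
    have hk2 : k < w.length + 1 := by simpa using hk
    rcases Nat.lt_or_ge k w.length with hlt | hge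
    · simpa [List.getElem_append_left hlt] using h k hlt
    · have hkeq : k = w.length := by omega
      subst hkeq
      have e : (w ++ [j]).get ⟨w.length, hk⟩ = j := by
        simp [List.get_eq_getElem]
      rw [e]; exact hj

lemma cylinder_concat_subset (w : List (Fin E.g)) (j : Fin E.g) :
    E.cylinder (w ++ [j]) ⊆ E.cylinder w := fun _ hx => (E.mem_cylinder_concat.1 hx).1

lemma cylinder_concat_disjoint (w : List (Fin E.g)) {j1 j2 : Fin E.g} (h : j1 ≠ j2) :
    Disjoint (E.cylinder (w ++ [j1])) (E.cylinder (w ++ [j2])) := by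
  rw [Set.disjoint_left]
  intro x h1 h2
  rw [mem_cylinder_concat] at h1 h2
  exact Set.disjoint_left.1 (E.branch_disjoint _ _ h) h1.2 h2.2

lemma cylinder_single (i : Fin E.g) : E.cylinder [i] = E.branch i := by
  have : ([i] : List (Fin E.g)) = [] ++ [i] := rfl
  rw [this]
  ext x
  rw [mem_cylinder_concat]
  simp only [cylinder_nil, List.length_nil, Function.iterate_zero, id]
  exact ⟨fun h => h.2, fun h => ⟨E.branch_subset i h, h⟩⟩

@[simp] lemma volume_cylinder_nil : volume (E.cylinder ([] : List (Fin E.g))) = 1 := by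
  rw [cylinder_nil]; simp

lemma volume_cylinder_le_one (w : List (Fin E.g)) : volume (E.cylinder w) ≤ 1 := by
  calc volume (E.cylinder w) ≤ volume (Ico (0:ℝ) 1) := measure_mono (E.cylinder_subset w)
  _ = 1 := by simp

lemma volume_cylinder_ne_top (w : List (Fin E.g)) : volume (E.cylinder w) ≠ ∞ :=
  (lt_of_le_of_lt (E.volume_cylinder_le_one w) (by norm_num)).ne

end ExpandingFullShift
namespace ExpandingFullShift
variable (E : ExpandingFullShift) (K : ℝ)

lemma branch_measurable (i : Fin E.g) : MeasurableSet (E.branch i) := by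
  obtain ⟨a, b, _, h⟩ := E.branch_Ico i
  rw [h]; exact measurableSet_Ico

lemma gpos : 0 < (E.g : ℝ) := by
  have : 0 < E.g := Nat.lt_trans Nat.one_pos E.one_lt_g
  exact_mod_cast this

lemma sum_volume_branch : ∑ i : Fin E.g, volume (E.branch i) = 1 := by
  have h := measure_biUnion_finset (μ := volume) (s := (Finset.univ : Finset (Fin E.g)))
    (f := E.branch) (fun i _ j _ hij => E.branch_disjoint i j hij)
    (fun i _ => E.branch_measurable i)
  simp only [Finset.mem_univ, Set.iUnion_true] at h
  rw [E.branch_cover] at h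
  rw [← h]
  simp [Real.volume_Ico]

lemma volume_branch_ne_top (i : Fin E.g) : volume (E.branch i) ≠ ∞ := by
  have h1 : volume (E.branch i) ≤ volume (Ico (0:ℝ) 1) := measure_mono (E.branch_subset i)
  simp only [Real.volume_Ico] at h1
  exact (lt_of_le_of_lt h1 (by norm_num [ENNReal.ofReal_lt_top])).ne

lemma exists_small_branch : ∃ i : Fin E.g, volume (E.branch i) ≤ ENNReal.ofReal (1 / E.g) := by
  have hg : 0 < (E.g : ℝ) := E.gpos
  by_contra h
  push_neg at h
  have hlt : ∀ i : Fin E.g, 1 / (E.g : ℝ) < (volume (E.branch i)).toReal := fun i =>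
    (ENNReal.ofReal_lt_iff_lt_toReal (by positivity) (E.volume_branch_ne_top i)).1 (h i)
  have hsum : ∑ i : Fin E.g, (volume (E.branch i)).toReal = 1 := by
    rw [← ENNReal.toReal_sum (fun i _ => E.volume_branch_ne_top i), E.sum_volume_branch]
    simp
  have hne : (Finset.univ : Finset (Fin E.g)).Nonempty :=
    ⟨⟨0, Nat.lt_trans Nat.one_pos E.one_lt_g⟩, Finset.mem_univ _⟩
  have h2 : (1:ℝ) < 1 := by
    calc (1:ℝ) = ∑ _i : Fin E.g, 1 / (E.g : ℝ) := by
          rw [Finset.sum_const]; simp [nsmul_eq_mul]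
          field_simp
    _ < ∑ i : Fin E.g, (volume (E.branch i)).toReal :=
          Finset.sum_lt_sum_of_nonempty hne (fun i _ => hlt i)
    _ = 1 := hsum
  exact absurd h2 (lt_irrefl _)

variable (hratio : ∀ (w : List (Fin E.g)) (i : Fin E.g),
      volume (E.cylinder w) ≤ ENNReal.ofReal ((E.g : ℝ) * K) * volume (E.cylinder (w ++ [i])))

include hratio

lemma one_le_K (hK : 0 < K) : 1 ≤ K := by
  obtain ⟨i, hi⟩ := E.exists_small_branch
  have h1 := hratio [] i
  rw [List.nil_append] at h1
  rw [volume_cylinder_nil, cylinder_single] at h1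
  have h2 : (1:ℝ≥0∞) ≤ ENNReal.ofReal ((E.g : ℝ) * K) * ENNReal.ofReal (1 / E.g) := by
    calc (1:ℝ≥0∞) ≤ ENNReal.ofReal ((E.g : ℝ) * K) * volume (E.branch i) := h1
    _ ≤ _ := by gcongr
  have hg : 0 < (E.g : ℝ) := E.gpos
  rw [← ENNReal.ofReal_mul (by positivity)] at h2
  have h3 : (1:ℝ) ≤ (E.g : ℝ) * K * (1 / E.g) := by
    have := ENNReal.one_le_ofReal.1 h2
    linarith
  calc (1:ℝ) ≤ (E.g : ℝ) * K * (1 / E.g) := h3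
  _ = K := by field_simp

lemma two_le_gK (hK : 0 < K) : 2 ≤ (E.g : ℝ) * K := by
  have h1 : 1 ≤ K := E.one_le_K K hratio hK
  have h2 : (2 : ℝ) ≤ (E.g : ℝ) := by exact_mod_cast E.one_lt_g
  nlinarith

lemma volume_concat_le (hK : 0 < K) (w : List (Fin E.g)) (j : Fin E.g) :
    volume (E.cylinder (w ++ [j])) ≤
      ENNReal.ofReal (1 - 1 / ((E.g : ℝ) * K)) * volume (E.cylinder w) := by
  have hgk2 : 2 ≤ (E.g : ℝ) * K := E.two_le_gK K hratio hK
  have hgk0 : 0 < (E.g : ℝ) * K := by linarith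
  have : Nontrivial (Fin E.g) := Fin.nontrivial_iff_two_le.2 E.one_lt_g
  obtain ⟨j', hj'⟩ := exists_ne j
  set a := volume (E.cylinder (w ++ [j])) with ha
  set b := volume (E.cylinder (w ++ [j'])) with hb
  set V := volume (E.cylinder w) with hV
  have hdisj : Disjoint (E.cylinder (w ++ [j])) (E.cylinder (w ++ [j'])) :=
    E.cylinder_concat_disjoint w (Ne.symm hj')
  have hsum : a + b ≤ V := by
    rw [ha, hb, hV, ← measure_union hdisj (E.cylinder_measurable _)]
    exact measure_mono (union_subset (E.cylinder_concat_subset w j) (E.cylinder_concat_subset w j'))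
  have hVb : V ≤ ENNReal.ofReal ((E.g : ℝ) * K) * b := hratio w j'
  -- pass to reals
  have hane : a ≠ ∞ := E.volume_cylinder_ne_top _
  have hbne : b ≠ ∞ := E.volume_cylinder_ne_top _
  have hVne : V ≠ ∞ := E.volume_cylinder_ne_top _
  set A := a.toReal
  set B := b.toReal
  set Vr := V.toReal
  have hA0 : 0 ≤ A := ENNReal.toReal_nonneg
  have hB0 : 0 ≤ B := ENNReal.toReal_nonneg
  have hV0 : 0 ≤ Vr := ENNReal.toReal_nonneg
  have hsum' : A + B ≤ Vr := by
    rw [← ENNReal.toReal_add hane hbne]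
    exact ENNReal.toReal_mono hVne hsum
  have hVb' : Vr ≤ (E.g : ℝ) * K * B := by
    have := ENNReal.toReal_mono (by
        exact ENNReal.mul_ne_top ENNReal.ofReal_ne_top hbne) hVb
    rwa [ENNReal.toReal_mul, ENNReal.toReal_ofReal hgk0.le] at this
  have hgoal : A ≤ (1 - 1 / ((E.g : ℝ) * K)) * Vr := by
    have hBge : Vr / ((E.g : ℝ) * K) ≤ B := by
      rw [div_le_iff₀ hgk0]; linarith [hVb']
    have : A ≤ Vr - Vr / ((E.g : ℝ) * K) := by linarith
    calc A ≤ Vr - Vr / ((E.g : ℝ) * K) := this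
    _ = (1 - 1 / ((E.g : ℝ) * K)) * Vr := by field_simp
  calc a = ENNReal.ofReal A := (ENNReal.ofReal_toReal hane).symm
  _ ≤ ENNReal.ofReal ((1 - 1 / ((E.g : ℝ) * K)) * Vr) := ENNReal.ofReal_le_ofReal hgoal
  _ = ENNReal.ofReal (1 - 1 / ((E.g : ℝ) * K)) * ENNReal.ofReal Vr := by
      rw [ENNReal.ofReal_mul]
      have : 1 / ((E.g : ℝ) * K) ≤ 1 / 2 := by
        apply one_div_le_one_div_of_le <;> linarith
      linarith
  _ = ENNReal.ofReal (1 - 1 / ((E.g : ℝ) * K)) * V := by rw [ENNReal.ofReal_toReal hVne]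

lemma volume_word_le (hK : 0 < K) (x : ℝ) (n : ℕ) :
    volume (E.cylinder (E.word x n)) ≤ ENNReal.ofReal ((1 - 1 / ((E.g : ℝ) * K)) ^ n) := by
  induction n with
  | zero => simp [word]
  | succ n ih =>
    rw [E.word_succ x n]
    calc volume (E.cylinder (E.word x n ++ [E.symb x n]))
        ≤ ENNReal.ofReal (1 - 1 / ((E.g : ℝ) * K)) * volume (E.cylinder (E.word x n)) :=
          E.volume_concat_le K hratio hK _ _
    _ ≤ ENNReal.ofReal (1 - 1 / ((E.g : ℝ) * K)) * ENNReal.ofReal ((1 - 1 / ((E.g : ℝ) * K)) ^ n) := by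
        gcongr
    _ = ENNReal.ofReal ((1 - 1 / ((E.g : ℝ) * K)) ^ (n + 1)) := by
        rw [← ENNReal.ofReal_mul]
        · ring_nf
        · have hgk2 : 2 ≤ (E.g : ℝ) * K := E.two_le_gK K hratio hK
          have : 1 / ((E.g : ℝ) * K) ≤ 1 / 2 := by
            apply one_div_le_one_div_of_le <;> linarith
          linarith

lemma exists_word_small (hK : 0 < K) (x : ℝ) {L : ℝ} (hL : 0 < L) :
    ∃ n, volume (E.cylinder (E.word x n)) ≤ ENNReal.ofReal L := by
  have hgk2 : 2 ≤ (E.g : ℝ) * K := E.two_le_gK K hratio hK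
  have hc1 : (1 - 1 / ((E.g : ℝ) * K)) < 1 := by
    have : 0 < 1 / ((E.g : ℝ) * K) := by positivity
    linarith
  have hc0 : 0 ≤ (1 - 1 / ((E.g : ℝ) * K)) := by
    have : 1 / ((E.g : ℝ) * K) ≤ 1 / 2 := by
      apply one_div_le_one_div_of_le <;> linarith
    linarith
  obtain ⟨n, hn⟩ := exists_pow_lt_of_lt_one hL hc1
  exact ⟨n, (E.volume_word_le K hratio hK x n).trans (ENNReal.ofReal_le_ofReal hn.le)⟩

end ExpandingFullShift
namespace ExpandingFullShift
variable (E : ExpandingFullShift) (K : ℝ)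

set_option maxHeartbeats 1000000 in
lemma cover_dyadic (hK : 0 < K)
    (hratio : ∀ (w : List (Fin E.g)) (i : Fin E.g),
      volume (E.cylinder w) ≤ ENNReal.ofReal ((E.g : ℝ) * K) * volume (E.cylinder (w ++ [i])))
    (s : ℝ) (hs0 : 0 < s)
    (a L : ℝ) (hL : 0 < L) (B : Set ℝ) (hB1 : B ⊆ Ico (0:ℝ) 1) (hB2 : B ⊆ Ico a (a + L)) :
    ∃ W : Finset (List (Fin E.g)), (B ⊆ ⋃ w ∈ W, E.cylinder w) ∧
      ∑ w ∈ W, volume (E.cylinder w) ^ s ≤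
        ENNReal.ofReal (2 * (E.g : ℝ) * K) * ENNReal.ofReal L ^ s := by
  classical
  have hgk2 : 2 ≤ (E.g : ℝ) * K := E.two_le_gK K hratio hK
  have hgk0 : 0 < (E.g : ℝ) * K := by linarith
  rcases le_or_gt 1 L with hL1 | hL1
  · -- big interval: one cylinder (the empty word) suffices
    refine ⟨{[]}, ?_, ?_⟩
    · intro x hx
      simp only [Finset.mem_singleton, Set.mem_iUnion]
      exact ⟨[], rfl, by rw [cylinder_nil]; exact hB1 hx⟩
    · rw [Finset.sum_singleton, volume_cylinder_nil, ENNReal.one_rpow]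
      have h1 : (1:ℝ≥0∞) ≤ ENNReal.ofReal (2 * (E.g : ℝ) * K) :=
        ENNReal.one_le_ofReal.2 (by linarith)
      have h2 : (1:ℝ≥0∞) ≤ ENNReal.ofReal L ^ s := by
        rw [← ENNReal.one_rpow s]
        exact ENNReal.rpow_le_rpow (ENNReal.one_le_ofReal.2 hL1) hs0.le
      calc (1:ℝ≥0∞) = 1 * 1 := (one_mul 1).symm
      _ ≤ _ := mul_le_mul' h1 h2
  · -- small interval
    have hex : ∀ x : ℝ, ∃ n, volume (E.cylinder (E.word x n)) ≤ ENNReal.ofReal L :=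
      fun x => E.exists_word_small K hratio hK x hL
    set nn : ℝ → ℕ := fun x => Nat.find (hex x) with hnn_def
    have hnn1 : ∀ x, volume (E.cylinder (E.word x (nn x))) ≤ ENNReal.ofReal L :=
      fun x => Nat.find_spec (hex x)
    have hnn2 : ∀ x m, m < nn x → ¬ (volume (E.cylinder (E.word x m)) ≤ ENNReal.ofReal L) :=
      fun x m hm => Nat.find_min (hex x) hm
    have hnn_pos : ∀ x, 0 < nn x := by
      intro x
      rcases Nat.eq_zero_or_pos (nn x) with h0 | h
      · exfalso
        have h1 := hnn1 x
        rw [h0] at h1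
        have : E.word x 0 = [] := by simp [word]
        rw [this, volume_cylinder_nil] at h1
        exact absurd (ENNReal.one_le_ofReal.1 h1) (by linarith)
      · exact h
    have hlow : ∀ x, ENNReal.ofReal L <
        ENNReal.ofReal ((E.g : ℝ) * K) * volume (E.cylinder (E.word x (nn x))) := by
      intro x
      have h1 : nn x - 1 < nn x := by have := hnn_pos x; omega
      have h2 := hnn2 x (nn x - 1) h1
      push_neg at h2
      have h3 : E.word x (nn x) = E.word x (nn x - 1) ++ [E.symb x (nn x - 1)] := by
        conv_lhs => rw [show nn x = (nn x - 1) + 1 by have := hnn_pos x; omega]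
        exact E.word_succ x _
      calc ENNReal.ofReal L < volume (E.cylinder (E.word x (nn x - 1))) := h2
      _ ≤ ENNReal.ofReal ((E.g : ℝ) * K) * volume (E.cylinder (E.word x (nn x))) := by
          rw [h3]; exact hratio _ _
    set 𝒲 : Set (List (Fin E.g)) := (fun x => E.word x (nn x)) '' B with h𝒲
    have hvol_le : ∀ w ∈ 𝒲, volume (E.cylinder w) ≤ ENNReal.ofReal L := by
      rintro w ⟨x, hx, rfl⟩; exact hnn1 x
    have hvol_gt : ∀ w ∈ 𝒲,
        ENNReal.ofReal L < ENNReal.ofReal ((E.g : ℝ) * K) * volume (E.cylinder w) := by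
      rintro w ⟨x, hx, rfl⟩; exact hlow x
    have hdisj : ∀ w1 ∈ 𝒲, ∀ w2 ∈ 𝒲, w1 ≠ w2 → Disjoint (E.cylinder w1) (E.cylinder w2) := by
      rintro w1 ⟨x, hx, rfl⟩ w2 ⟨y, hy, rfl⟩ hne
      rw [Set.disjoint_left]
      intro z hz1 hz2
      have e1 : E.word x (nn x) = E.word z (nn x) := by
        have h := E.word_eq_of_mem hz1
        simpa using h
      have e2 : E.word y (nn y) = E.word z (nn y) := by
        have h := E.word_eq_of_mem hz2
        simpa using h
      have key : ∀ u : ℝ, z ∈ E.cylinder (E.word u (nn u)) →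
          E.word u (nn u) = E.word z (nn u) → nn z = nn u := by
        intro u hzu heq
        have hle : nn z ≤ nn u := Nat.find_le (by rw [← heq]; exact hnn1 u)
        have hge : ¬ nn z < nn u := by
          intro hlt
          have hsub : z ∈ E.cylinder (E.word u (nn z)) :=
            E.cylinder_word_anti u hle hzu
          have heq2 : E.word u (nn z) = E.word z (nn z) := by
            have h := E.word_eq_of_mem hsub
            simpa using h
          exact hnn2 u (nn z) hlt (by rw [heq2]; exact hnn1 z)
        omega
      have k1 : nn z = nn x := key x hz1 e1
      have k2 : nn z = nn y := key y hz2 e2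
      apply hne
      show E.word x (nn x) = E.word y (nn y)
      rw [e1, e2, ← k1, ← k2]
    set Ia : Set ℝ := Ico a (a + L) with hIa
    have htri : ∀ w ∈ 𝒲, E.cylinder w ⊆ Ia ∨ a ∈ E.cylinder w ∨ (a + L) ∈ E.cylinder w := by
      rintro w hw
      obtain ⟨x, hx, rfl⟩ := hw
      set w := E.word x (nn x) with hwdef
      by_cases hsub : E.cylinder w ⊆ Ia
      · exact Or.inl hsub
      right
      obtain ⟨u, hu, hu2⟩ := not_subset.1 hsub
      have hxc : x ∈ E.cylinder w := E.mem_cylinder_word (hB1 hx) _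
      have hxI : x ∈ Ia := hB2 hx
      have hoc := E.cylinder_ordConnected w
      rcases lt_or_ge u a with h1 | h1
      · exact Or.inl (hoc.out hu hxc ⟨h1.le, hxI.1⟩)
      · have h2 : a + L ≤ u := by
          by_contra h3
          push_neg at h3
          exact hu2 ⟨h1, h3⟩
        exact Or.inr (hoc.out hxc hu ⟨hxI.2.le, h2⟩)
    set Win : Set (List (Fin E.g)) := {w ∈ 𝒲 | E.cylinder w ⊆ Ia} with hWin
    set Wa : Set (List (Fin E.g)) := {w ∈ 𝒲 | a ∈ E.cylinder w} with hWa
    set Wb : Set (List (Fin E.g)) := {w ∈ 𝒲 | (a + L) ∈ E.cylinder w} with hWb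
    have hcov3 : 𝒲 ⊆ Win ∪ Wa ∪ Wb := by
      intro w hw
      rcases htri w hw with h | h | h
      · exact Or.inl (Or.inl ⟨hw, h⟩)
      · exact Or.inl (Or.inr ⟨hw, h⟩)
      · exact Or.inr ⟨hw, h⟩
    have hWa_sub : Wa.Subsingleton := by
      intro w1 h1 w2 h2
      by_contra hne
      exact (Set.disjoint_left.1 (hdisj w1 h1.1 w2 h2.1 hne) h1.2) h2.2
    have hWb_sub : Wb.Subsingleton := by
      intro w1 h1 w2 h2
      by_contra hne
      exact (Set.disjoint_left.1 (hdisj w1 h1.1 w2 h2.1 hne) h1.2) h2.2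
    have heach : ∀ w ∈ 𝒲, ENNReal.ofReal (L / ((E.g : ℝ) * K)) ≤ volume (E.cylinder w) := by
      intro w hw
      rw [ENNReal.ofReal_div_of_pos hgk0]
      rw [ENNReal.div_le_iff_le_mul (Or.inl (ENNReal.ofReal_pos.2 hgk0).ne') (Or.inl ENNReal.ofReal_ne_top)]
      rw [mul_comm]
      exact (hvol_gt w hw).le
    have hFcard : ∀ F : Finset (List (Fin E.g)), ↑F ⊆ Win → (F.card : ℝ) ≤ (E.g : ℝ) * K := by
      intro F hF
      have hdF : ∑ w ∈ F, volume (E.cylinder w) ≤ ENNReal.ofReal L := by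
        rw [← measure_biUnion_finset
          (fun w1 h1 w2 h2 hne => hdisj w1 (hF h1).1 w2 (hF h2).1 hne)
          (fun w _ => E.cylinder_measurable w)]
        calc volume (⋃ w ∈ F, E.cylinder w) ≤ volume Ia := by
              apply measure_mono
              intro y hy
              simp only [Set.mem_iUnion] at hy
              obtain ⟨w, hw, hy⟩ := hy
              exact (hF hw).2 hy
        _ = ENNReal.ofReal L := by rw [hIa, Real.volume_Ico]; ring_nf
      have hsum2 : (F.card : ℝ≥0∞) * ENNReal.ofReal (L / ((E.g : ℝ) * K)) ≤ ENNReal.ofReal L := by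
        calc (F.card : ℝ≥0∞) * ENNReal.ofReal (L / ((E.g : ℝ) * K))
            = ∑ _w ∈ F, ENNReal.ofReal (L / ((E.g : ℝ) * K)) := by
              rw [Finset.sum_const, nsmul_eq_mul]
        _ ≤ ∑ w ∈ F, volume (E.cylinder w) :=
              Finset.sum_le_sum (fun w hw => heach w (hF hw).1)
        _ ≤ ENNReal.ofReal L := hdF
      have hreal : (F.card : ℝ) * (L / ((E.g : ℝ) * K)) ≤ L := by
        rw [← ENNReal.ofReal_natCast, ← ENNReal.ofReal_mul (by positivity)] at hsum2
        exact (ENNReal.ofReal_le_ofReal_iff hL.le).1 hsum2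
      have h5 := mul_le_mul_of_nonneg_right hreal hgk0.le
      rw [mul_assoc, div_mul_cancel₀ _ hgk0.ne'] at h5
      exact le_of_mul_le_mul_right (by linarith [h5]) hL
    have hWin_fin : Win.Finite := by
      by_contra hinf
      obtain ⟨F, hFsub, hFc⟩ :=
        Set.Infinite.exists_subset_card_eq hinf (⌈(E.g : ℝ) * K⌉₊ + 1)
      have h6 := hFcard F hFsub
      rw [hFc] at h6
      have h7 := Nat.le_ceil ((E.g : ℝ) * K)
      push_cast at h6
      linarith
    have hWin_card : ∀ F : Finset (List (Fin E.g)), F = hWin_fin.toFinset →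
        (F.card : ℝ) ≤ (E.g : ℝ) * K := by
      intro F hFeq
      apply hFcard
      rw [hFeq]
      simp
    have h𝒲fin : 𝒲.Finite :=
      Set.Finite.subset ((hWin_fin.union hWa_sub.finite).union hWb_sub.finite) hcov3
    refine ⟨h𝒲fin.toFinset, ?_, ?_⟩
    · intro x hx
      have hmem : E.word x (nn x) ∈ 𝒲 := ⟨x, hx, rfl⟩
      exact Set.mem_biUnion (h𝒲fin.mem_toFinset.2 hmem) (E.mem_cylinder_word (hB1 hx) _)
    · have hcard : (h𝒲fin.toFinset.card : ℝ) ≤ 2 * ((E.g : ℝ) * K) := by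
        have hsub : h𝒲fin.toFinset ⊆
            hWin_fin.toFinset ∪ hWa_sub.finite.toFinset ∪ hWb_sub.finite.toFinset := by
          intro w hw
          have := hcov3 (h𝒲fin.mem_toFinset.1 hw)
          rcases this with (h | h) | h
          · exact Finset.mem_union_left _ (Finset.mem_union_left _ (by simpa using h))
          · exact Finset.mem_union_left _ (Finset.mem_union_right _ (by simpa using h))
          · exact Finset.mem_union_right _ (by simpa using h)
        have h8 := Finset.card_le_card hsub
        have h9 := Finset.card_union_le (hWin_fin.toFinset ∪ hWa_sub.finite.toFinset)
          hWb_sub.finite.toFinset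
        have h10 := Finset.card_union_le hWin_fin.toFinset hWa_sub.finite.toFinset
        have h11 : (hWin_fin.toFinset.card : ℝ) ≤ (E.g : ℝ) * K := hWin_card _ rfl
        have h12 : hWa_sub.finite.toFinset.card ≤ 1 := by
          rw [Finset.card_le_one]
          intro w1 hw1 w2 hw2
          exact hWa_sub (by simpa using hw1) (by simpa using hw2)
        have h13 : hWb_sub.finite.toFinset.card ≤ 1 := by
          rw [Finset.card_le_one]
          intro w1 hw1 w2 hw2
          exact hWb_sub (by simpa using hw1) (by simpa using hw2)
        have : (h𝒲fin.toFinset.card : ℝ) ≤ (hWin_fin.toFinset.card : ℝ) + 1 + 1 := by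
          push_cast
          have := le_trans h8 h9
          have h14 : (h𝒲fin.toFinset.card : ℝ) ≤
              ((hWin_fin.toFinset ∪ hWa_sub.finite.toFinset).card : ℝ) +
                (hWb_sub.finite.toFinset.card : ℝ) := by exact_mod_cast this
          have h15 : ((hWin_fin.toFinset ∪ hWa_sub.finite.toFinset).card : ℝ) ≤
              (hWin_fin.toFinset.card : ℝ) + (hWa_sub.finite.toFinset.card : ℝ) := by
            exact_mod_cast h10
          have h16 : (hWa_sub.finite.toFinset.card : ℝ) ≤ 1 := by exact_mod_cast h12
          have h17 : (hWb_sub.finite.toFinset.card : ℝ) ≤ 1 := by exact_mod_cast h13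
          linarith
        linarith
      calc ∑ w ∈ h𝒲fin.toFinset, volume (E.cylinder w) ^ s
          ≤ ∑ _w ∈ h𝒲fin.toFinset, ENNReal.ofReal L ^ s := by
            apply Finset.sum_le_sum
            intro w hw
            exact ENNReal.rpow_le_rpow (hvol_le w (h𝒲fin.mem_toFinset.1 hw)) hs0.le
      _ = (h𝒲fin.toFinset.card : ℝ≥0∞) * ENNReal.ofReal L ^ s := by
            rw [Finset.sum_const, nsmul_eq_mul]
      _ ≤ ENNReal.ofReal (2 * (E.g : ℝ) * K) * ENNReal.ofReal L ^ s := by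
            apply mul_le_mul_left
            rw [← ENNReal.ofReal_natCast]
            apply ENNReal.ofReal_le_ofReal
            calc (h𝒲fin.toFinset.card : ℝ) ≤ 2 * ((E.g : ℝ) * K) := hcard
            _ = 2 * (E.g : ℝ) * K := by ring

end ExpandingFullShift
lemma tsum_dite_toList {α : Type*} (W : Finset α) (f : α → ℝ≥0∞) :
    (∑' j : ℕ, if h : j < W.toList.length then f (W.toList.get ⟨j, h⟩) else 0) =
      ∑ w ∈ W, f w := by
  classical
  rw [tsum_eq_sum (s := Finset.range W.toList.length)
    (fun j hj => dif_neg (by simpa using hj))]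
  rw [← Finset.sum_map_toList W f]
  have h1 : (W.toList.map f).sum = ∑ i : Fin W.toList.length, f (W.toList.get i) := by
    conv_lhs => rw [← List.ofFn_get W.toList, List.map_ofFn]
    rw [List.sum_ofFn]
    rfl
  rw [h1, ← Fin.sum_univ_eq_sum_range
    (fun j => if h : j < W.toList.length then f (W.toList.get ⟨j, h⟩) else 0) W.toList.length]
  apply Finset.sum_congr rfl
  intro i _
  rw [dif_pos i.isLt]

namespace ExpandingFullShift
variable (E : ExpandingFullShift) (K : ℝ)

lemma exists_word_rpow_small (hK : 0 < K)
    (hratio : ∀ (w : List (Fin E.g)) (i : Fin E.g),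
      volume (E.cylinder w) ≤ ENNReal.ofReal ((E.g : ℝ) * K) * volume (E.cylinder (w ++ [i])))
    {s : ℝ} (hs0 : 0 < s) {t : ℝ} (ht : 0 < t) :
    ∃ w : List (Fin E.g), volume (E.cylinder w) ^ s ≤ ENNReal.ofReal t := by
  obtain ⟨n, hn⟩ := E.exists_word_small K hratio hK 0 (show (0:ℝ) < t ^ (1/s) by positivity)
  refine ⟨E.word 0 n, ?_⟩
  calc volume (E.cylinder (E.word 0 n)) ^ s ≤ (ENNReal.ofReal (t ^ (1/s))) ^ s :=
        ENNReal.rpow_le_rpow hn hs0.le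
  _ = ENNReal.ofReal ((t ^ (1/s)) ^ s) := ENNReal.ofReal_rpow_of_pos (by positivity)
  _ = ENNReal.ofReal t := by
      congr 1
      rw [← Real.rpow_mul ht.le, one_div, inv_mul_cancel₀ hs0.ne', Real.rpow_one]

set_option maxHeartbeats 1000000 in
lemma cylMeasure_le_of_cover (hK : 0 < K)
    (hratio : ∀ (w : List (Fin E.g)) (i : Fin E.g),
      volume (E.cylinder w) ≤ ENNReal.ofReal ((E.g : ℝ) * K) * volume (E.cylinder (w ++ [i])))
    {s : ℝ} (hs0 : 0 < s) (A : Set ℝ) (hA : A ⊆ Ico (0:ℝ) 1)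
    (I : ℕ → Set ℝ) (hdy : ∀ i, IsDyadic (I i)) (hcov : A ⊆ ⋃ i, I i)
    {ε : ℝ} (hε : 0 < ε) :
    E.cylMeasure s A ≤ ENNReal.ofReal (2 * (E.g : ℝ) * K) * (∑' i, volume (I i) ^ s)
      + ENNReal.ofReal (ε * 2) := by
  classical
  have hIc : ∀ i, ∃ (a' L : ℝ), 0 < L ∧ I i = Ico a' (a' + L) ∧
      volume (I i) = ENNReal.ofReal L := by
    intro i
    obtain ⟨k, m, hkm⟩ := hdy i
    refine ⟨2^k * m, 2^k, by positivity, ?_, ?_⟩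
    · rw [hkm]; ring_nf
    · rw [hkm, Real.volume_Ico]; ring_nf
  choose aa LL hLpos hIeq hIvol using hIc
  have hWex : ∀ i, ∃ W : Finset (List (Fin E.g)), (A ∩ I i ⊆ ⋃ w ∈ W, E.cylinder w) ∧
      ∑ w ∈ W, volume (E.cylinder w) ^ s ≤
        ENNReal.ofReal (2 * (E.g : ℝ) * K) * ENNReal.ofReal (LL i) ^ s := by
    intro i
    apply E.cover_dyadic K hK hratio s hs0 (aa i) (LL i) (hLpos i)
    · exact Set.inter_subset_left.trans hA
    · rw [← hIeq i]; exact Set.inter_subset_right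
  choose W hWcov hWsum using hWex
  have hpad : ∀ n : ℕ, ∃ w : List (Fin E.g),
      volume (E.cylinder w) ^ s ≤ ENNReal.ofReal (ε * (1/2) ^ n) :=
    fun n => E.exists_word_rpow_small K hK hratio hs0 (by positivity)
  choose u hu using hpad
  set e : ℕ ≃ ℕ × ℕ := (Denumerable.eqv (ℕ × ℕ)).symm with he
  set li : ℕ → List (List (Fin E.g)) := fun i => (W i).toList with hli
  set cP : ℕ × ℕ → ℕ → List (Fin E.g) := fun p n =>
    if h : p.2 < (li p.1).length then (li p.1).get ⟨p.2, h⟩ else u n with hcP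
  set c : ℕ → List (Fin E.g) := fun n => cP (e n) n with hc
  have hcover : A ⊆ ⋃ n, E.cylinder (c n) := by
    intro x hx
    obtain ⟨i, hi⟩ := Set.mem_iUnion.1 (hcov hx)
    obtain ⟨w, hw, hxw⟩ := Set.mem_iUnion₂.1 (hWcov i ⟨hx, hi⟩)
    have hwl : w ∈ li i := by rw [hli]; exact Finset.mem_toList.2 hw
    obtain ⟨j, hjw⟩ := List.mem_iff_get.1 hwl
    refine Set.mem_iUnion.2 ⟨e.symm (i, (j : ℕ)), ?_⟩
    have h1 : e (e.symm (i, (j : ℕ))) = (i, (j : ℕ)) := e.apply_symm_apply _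
    have h2 : ∀ (q : ℕ × ℕ), q = (i, (j : ℕ)) → ∀ m : ℕ, cP q m = w := by
      rintro q rfl m
      simp only [hcP]
      rw [dif_pos j.isLt, ← hjw]
    have h3 : c (e.symm (i, (j : ℕ))) = w := by
      simp only [hc]
      exact h2 _ h1 _
    rw [h3]
    exact hxw
  set D : ℕ × ℕ → ℝ≥0∞ := fun p =>
    if h : p.2 < (li p.1).length then volume (E.cylinder ((li p.1).get ⟨p.2, h⟩)) ^ s else 0
    with hD
  have hFle : ∀ n, volume (E.cylinder (c n)) ^ s ≤ D (e n) + ENNReal.ofReal (ε * (1/2) ^ n) := by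
    intro n
    simp only [hc, hcP, hD]
    by_cases h : (e n).2 < (li (e n).1).length
    · rw [dif_pos h, dif_pos h]
      exact le_self_add
    · rw [dif_neg h, dif_neg h, zero_add]
      exact hu n
  have hG : ∑' n, D (e n) ≤ ENNReal.ofReal (2 * (E.g : ℝ) * K) * ∑' i, volume (I i) ^ s := by
    rw [e.tsum_eq D, ENNReal.tsum_prod']
    have hrow : ∀ i, ∑' j, D (i, j) = ∑ w ∈ W i, volume (E.cylinder w) ^ s := by
      intro i
      exact tsum_dite_toList (W i) (fun w => volume (E.cylinder w) ^ s)
    calc ∑' i, ∑' j, D (i, j) = ∑' i, ∑ w ∈ W i, volume (E.cylinder w) ^ s := by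
          exact tsum_congr hrow
    _ ≤ ∑' i, ENNReal.ofReal (2 * (E.g : ℝ) * K) * ENNReal.ofReal (LL i) ^ s :=
          ENNReal.tsum_le_tsum (fun i => hWsum i)
    _ = ENNReal.ofReal (2 * (E.g : ℝ) * K) * ∑' i, ENNReal.ofReal (LL i) ^ s :=
          ENNReal.tsum_mul_left
    _ = ENNReal.ofReal (2 * (E.g : ℝ) * K) * ∑' i, volume (I i) ^ s := by
          congr 1
          exact tsum_congr (fun i => by rw [hIvol i])
  have hH : ∑' n, ENNReal.ofReal (ε * (1/2) ^ n) ≤ ENNReal.ofReal (ε * 2) := by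
    have hsummable : Summable (fun n : ℕ => ε * (1/2) ^ n) :=
      (summable_geometric_two).mul_left ε
    rw [← ENNReal.ofReal_tsum_of_nonneg (fun n => by positivity) hsummable]
    apply ENNReal.ofReal_le_ofReal
    rw [tsum_mul_left, tsum_geometric_two]
  calc E.cylMeasure s A ≤ ∑' n, volume (E.cylinder (c n)) ^ s := by
        apply iInf₂_le c hcover
  _ ≤ ∑' n, (D (e n) + ENNReal.ofReal (ε * (1/2) ^ n)) := ENNReal.tsum_le_tsum hFle
  _ = (∑' n, D (e n)) + ∑' n, ENNReal.ofReal (ε * (1/2) ^ n) := ENNReal.tsum_add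
  _ ≤ _ := add_le_add hG hH

end ExpandingFullShift

open ExpandingFullShift in
/-- if every child cylinder has length at least `1/(gK)` times its
parent's, then `M^s_∞(A) ≥ N^s_∞(A)/(2gK)` for every `A ⊆ [0,1)`. -/
theorem dyadicMeasure_ge_cylMeasure (E : ExpandingFullShift) (K : ℝ) (hK : 0 < K)
    (hratio : ∀ (w : List (Fin E.g)) (i : Fin E.g),
      volume (E.cylinder w) ≤ ENNReal.ofReal ((E.g : ℝ) * K) * volume (E.cylinder (w ++ [i])))
    (s : ℝ) (hs0 : 0 < s) (hs1 : s ≤ 1) (A : Set ℝ) (hA : A ⊆ Ico (0:ℝ) 1) :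
    E.cylMeasure s A ≤ ENNReal.ofReal (2 * (E.g : ℝ) * K) * dyadicMeasure s A := by
  have hgk2 : 2 ≤ (E.g : ℝ) * K := E.two_le_gK K hratio hK
  have h2gk : 0 < 2 * (E.g : ℝ) * K := by linarith
  have hstep : ∀ (I : ℕ → Set ℝ), (∀ i, IsDyadic (I i)) → A ⊆ ⋃ i, I i →
      E.cylMeasure s A ≤ ENNReal.ofReal (2 * (E.g : ℝ) * K) * ∑' i, volume (I i) ^ s := by
    intro I hdy hcov
    apply ENNReal.le_of_forall_pos_le_add
    intro δ hδ _
    have hδ2 : 0 < (δ : ℝ) / 2 := by positivity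
    calc E.cylMeasure s A
        ≤ ENNReal.ofReal (2 * (E.g : ℝ) * K) * (∑' i, volume (I i) ^ s)
          + ENNReal.ofReal (((δ : ℝ) / 2) * 2) :=
          E.cylMeasure_le_of_cover K hK hratio hs0 A hA I hdy hcov hδ2
    _ = ENNReal.ofReal (2 * (E.g : ℝ) * K) * (∑' i, volume (I i) ^ s) + δ := by
          rw [div_mul_cancel₀ _ (two_ne_zero)]
          rw [ENNReal.ofReal_coe_nnreal]
  by_cases hD : dyadicMeasure s A = ∞
  · rw [hD, ENNReal.mul_top (ENNReal.ofReal_pos.2 h2gk).ne']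
    exact le_top
  apply ENNReal.le_of_forall_pos_le_add
  intro δ hδ _
  set η : ℝ := (δ : ℝ) / (2 * (E.g : ℝ) * K) with hη_def
  have hη : 0 < η := by positivity
  have hDlt : dyadicMeasure s A < dyadicMeasure s A + ENNReal.ofReal η :=
    ENNReal.lt_add_right hD (by simp [ENNReal.ofReal_eq_zero]; linarith)
  have h4 : (⨅ (I : ℕ → Set ℝ) (_ : ∀ i, IsDyadic (I i)) (_ : A ⊆ ⋃ i, I i),
      ∑' i, volume (I i) ^ s) < dyadicMeasure s A + ENNReal.ofReal η := hDlt
  simp only [iInf_lt_iff] at h4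
  obtain ⟨I, hdy, hcov, hIlt⟩ := h4
  calc E.cylMeasure s A
      ≤ ENNReal.ofReal (2 * (E.g : ℝ) * K) * ∑' i, volume (I i) ^ s := hstep I hdy hcov
  _ ≤ ENNReal.ofReal (2 * (E.g : ℝ) * K) * (dyadicMeasure s A + ENNReal.ofReal η) := by
      exact mul_le_mul_right hIlt.le _
  _ = ENNReal.ofReal (2 * (E.g : ℝ) * K) * dyadicMeasure s A
      + ENNReal.ofReal (2 * (E.g : ℝ) * K) * ENNReal.ofReal η := by rw [mul_add]
  _ ≤ ENNReal.ofReal (2 * (E.g : ℝ) * K) * dyadicMeasure s A + δ := by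
      apply add_le_add_right
      rw [← ENNReal.ofReal_mul h2gk.le, hη_def, mul_div_cancel₀ _ h2gk.ne']
      rw [ENNReal.ofReal_coe_nnreal]
end
end

section
/- Let β ∈ (1,2) be such that the β-expansion of 1 terminates (d(1,β) = j₀…j_{k−1}0^∞). Then for any cylinder C_{x₀…x_{n−1}} of the β-shift there exists l ≥ 0 such that C_{x₀…x_{n−1}} = C_{x₀…x_{n−1}0^l}, the cylinder C_{x₀…x_{n−1}0^{l+1}} is a similar copy of [0,1) scaled by β^{−(n+l+1)}, and |C_{x₀…x_{n−1}0^{l+1}}| ≥ (1/β)|C_{x₀…x_{n−1}}|. -/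
open Set MeasureTheory Filter
open scoped ENNReal Classical

noncomputable section

/-- The β-transformation `x ↦ βx mod 1`. -/
def betaMap (β : ℝ) (x : ℝ) : ℝ := Int.fract (β * x)

/-- The digits `d_n(x,β) = ⌊β f_β^n(x)⌋` of the greedy `β`-expansion. -/
def betaDigit (β x : ℝ) (n : ℕ) : ℤ := ⌊β * (betaMap β)^[n] x⌋

/-- The `β`-expansion of `1` terminates: `d(1,β) = j₀ … j_{k-1} 0^∞`. -/
def TerminatesAtOne (β : ℝ) : Prop := ∃ N : ℕ, ∀ n ≥ N, betaDigit β 1 n = 0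

/-- The cylinder `[i₀ … i_{n-1}] ⊆ [0,1)` of the `β`-expansion. -/
def betaCyl (β : ℝ) (w : List ℤ) : Set ℝ :=
  {x ∈ Ico (0:ℝ) 1 | ∀ k (hk : k < w.length), betaDigit β x k = w.get ⟨k, hk⟩}

/-- The outer measure `N^s_∞` from countable covers by cylinders of the `β`-expansion. -/
def betaCylMeasure (β s : ℝ) (A : Set ℝ) : ℝ≥0∞ :=
  ⨅ (c : ℕ → List ℤ) (_ : A ⊆ ⋃ i, betaCyl β (c i)),
    ∑' i, volume (betaCyl β (c i)) ^ s

/-- The empirical frequency `τ^β_w(x,n)/(n-m)` of the binary word `w` of length `m`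
among the first `n` digits of the `β`-expansion of `x`. -/
def betaFreq (β : ℝ) {m : ℕ} (w : Fin m → Fin 2) (x : ℝ) (n : ℕ) : ℝ :=
  (((Finset.range (n - m)).filter
      (fun i => ∀ k : Fin m, betaDigit β x (i + k) = ((w k : ℕ) : ℤ))).card : ℝ) / ((n - m : ℕ) : ℝ)

/-- `G^{β,m}_{p̄}`: points whose length-`m` word frequencies in the `β`-expansion
converge to `p̄`. -/
def betaGset (β : ℝ) (m : ℕ) (p : (Fin m → Fin 2) → ℝ) : Set ℝ :=
  {x ∈ Ico (0:ℝ) 1 | ∀ w : Fin m → Fin 2,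
    Tendsto (fun n => betaFreq β w x n) atTop (nhds (p w))}

/-- `G^{β,m}_{p̄}(n,ε)`: points whose empirical frequencies at time `n` are within `ε`
of `p̄` componentwise. -/
def betaGsetApprox (β : ℝ) (m : ℕ) (p : (Fin m → Fin 2) → ℝ) (n : ℕ) (ε : ℝ) : Set ℝ :=
  {x ∈ Ico (0:ℝ) 1 | ∀ w : Fin m → Fin 2, |betaFreq β w x n - p w| < ε}

/-- `p̄ ∈ A^{β,m}(x)`: `p̄` is an accumulation point of the empirical frequency vectors
of the `β`-expansion of `x`. -/
def betaFreqAccum (β : ℝ) (m : ℕ) (p : (Fin m → Fin 2) → ℝ) (x : ℝ) : Prop :=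
  MapClusterPt p atTop (fun n => fun w => betaFreq β w x n)

/-- The constant `Q(s,β) = β^{-s} Σ_{i=0}^∞ (1 - 1/β)^{is}`. -/
def Qconst (s β : ℝ) : ℝ := β ^ (-s) * ∑' i : ℕ, ((1 - 1/β) ^ i) ^ s

namespace BetaAux

def V (β : ℝ) (w : List ℤ) : ℝ := w.foldl (fun acc d => β * acc + (d : ℝ)) 0

lemma V_concat (β : ℝ) (w : List ℤ) (d : ℤ) :
    V β (w ++ [d]) = β * V β w + (d : ℝ) := by
  simp [V, List.foldl_append]

lemma V_take_succ (β : ℝ) (w : List ℤ) (k : ℕ) (hk : k < w.length) :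
    V β (w.take (k + 1)) = β * V β (w.take k) + (w.get ⟨k, hk⟩ : ℝ) := by
  have h : w.take (k+1) = w.take k ++ [w.get ⟨k, hk⟩] := by
    rw [List.take_succ]
    congr 1
    rw [List.getElem?_eq_getElem hk]
    simp [List.get_eq_getElem]
  rw [h, V_concat]

lemma iter_eq (β x : ℝ) (w : List ℤ) (k : ℕ) (hk : k ≤ w.length)
    (hd : ∀ j, j < k → ∀ (hj : j < w.length), betaDigit β x j = w.get ⟨j, hj⟩) :
    (betaMap β)^[k] x = β ^ k * x - V β (w.take k) := by
  induction k with
  | zero => simp [V]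
  | succ k ih =>
    have hk' : k < w.length := hk
    have ihk := ih hk'.le (fun j hj => hd j (Nat.lt_succ_of_lt hj))
    have hdk := hd k (Nat.lt_succ_self k) hk'
    have hfl : ⌊β * (β ^ k * x - V β (w.take k))⌋ = w.get ⟨k, hk'⟩ := by
      rw [← ihk]; exact hdk
    rw [Function.iterate_succ_apply', ihk]
    show Int.fract (β * (β ^ k * x - V β (w.take k))) = _
    rw [Int.fract, hfl, V_take_succ β w k hk']
    ring

lemma mem_cyl_iff (β : ℝ) (w : List ℤ) (x : ℝ) :
    x ∈ betaCyl β w ↔ ∀ k ≤ w.length, β ^ k * x - V β (w.take k) ∈ Ico (0:ℝ) 1 := by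
  constructor
  · intro hx
    obtain ⟨hx01, hd⟩ := hx
    intro k hk
    have h := iter_eq β x w k hk (fun j _ hj' => hd j hj')
    rw [← h]
    cases k with
    | zero => simpa using hx01
    | succ k =>
      rw [Function.iterate_succ_apply']
      exact ⟨Int.fract_nonneg _, Int.fract_lt_one _⟩
  · intro H
    have hx01 : x ∈ Ico (0:ℝ) 1 := by simpa [V] using H 0 (Nat.zero_le _)
    refine ⟨hx01, ?_⟩
    intro j
    induction j using Nat.strong_induction_on with
    | _ j IH =>
      intro hj
      have hiter := iter_eq β x w j hj.le (fun i hi hi' => IH i hi hi')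
      have h1 := H (j+1) hj
      rw [V_take_succ β w j hj] at h1
      show ⌊β * (betaMap β)^[j] x⌋ = w.get ⟨j, hj⟩
      have e : β * (β ^ j * x - V β (List.take j w))
          = β ^ (j+1) * x - β * V β (List.take j w) := by rw [pow_succ]; ring
      rw [hiter, Int.floor_eq_iff, e]
      obtain ⟨h1a, h1b⟩ := h1
      constructor
      · linarith
      · linarith

lemma digits_nonneg (β : ℝ) (hβ : 1 < β) (w : List ℤ) (hw : (betaCyl β w).Nonempty) :
    ∀ j (hj : j < w.length), (0:ℤ) ≤ w.get ⟨j, hj⟩ := by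
  obtain ⟨x, hx01, hd⟩ := hw
  intro j hj
  rw [← hd j hj]
  apply Int.floor_nonneg.mpr
  apply mul_nonneg (by linarith)
  cases j with
  | zero => exact hx01.1
  | succ j => rw [Function.iterate_succ_apply']; exact Int.fract_nonneg _

lemma V_take_le (β : ℝ) (hβ : 1 < β) (w : List ℤ)
    (hpos : ∀ j (hj : j < w.length), (0:ℤ) ≤ w.get ⟨j, hj⟩) :
    ∀ j k, k + j ≤ w.length → β ^ j * V β (w.take k) ≤ V β (w.take (k + j)) := by
  intro j
  induction j with
  | zero => intro k _; simp
  | succ j ih =>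
    intro k hk
    have hk1 : k < w.length := by omega
    have hget : (0:ℝ) ≤ (w.get ⟨k, hk1⟩ : ℝ) := by exact_mod_cast hpos k hk1
    have h1 : β * V β (w.take k) ≤ V β (w.take (k+1)) := by
      rw [V_take_succ β w k hk1]; linarith
    have h2 := ih (k+1) (by omega)
    calc β ^ (j+1) * V β (w.take k) = β ^ j * (β * V β (w.take k)) := by ring
      _ ≤ β ^ j * V β (w.take (k+1)) :=
          mul_le_mul_of_nonneg_left h1 (by positivity)
      _ ≤ V β (w.take (k+1+j)) := h2
      _ = V β (w.take (k+(j+1))) := by rw [show k+1+j = k+(j+1) from by omega]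

lemma mem_of_le (β : ℝ) (hβ : 1 < β) (w : List ℤ)
    (hpos : ∀ j (hj : j < w.length), (0:ℤ) ≤ w.get ⟨j, hj⟩) (x y : ℝ)
    (hx : x ∈ betaCyl β w) (hy1 : V β w / β ^ w.length ≤ y) (hy2 : y ≤ x) :
    y ∈ betaCyl β w := by
  rw [mem_cyl_iff] at hx ⊢
  intro k hk
  have hbk : (0:ℝ) < β ^ k := by positivity
  have hbn : (0:ℝ) < β ^ w.length := by positivity
  have hx' := hx k hk
  constructor
  · have h := V_take_le β hβ w hpos (w.length - k) k (by omega)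
    rw [show k + (w.length - k) = w.length from by omega, List.take_length] at h
    have hsplit : β ^ (w.length - k) * β ^ k = β ^ w.length := by
      rw [← pow_add]; congr 1; omega
    have hkey : V β (w.take k) ≤ β ^ k * (V β w / β ^ w.length) := by
      rw [← mul_div_assoc, le_div_iff₀ hbn]
      calc V β (w.take k) * β ^ w.length
          = (β ^ (w.length - k) * V β (w.take k)) * β ^ k := by rw [← hsplit]; ring
        _ ≤ V β w * β ^ k := mul_le_mul_of_nonneg_right h hbk.le
        _ = β ^ k * V β w := mul_comm _ _
    have : β ^ k * (V β w / β ^ w.length) ≤ β ^ k * y :=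
      mul_le_mul_of_nonneg_left hy1 hbk.le
    linarith
  · have : β ^ k * y ≤ β ^ k * x := mul_le_mul_of_nonneg_left hy2 hbk.le
    linarith [hx'.2]

lemma exists_gt (β : ℝ) (hβ : 1 < β) (w : List ℤ) (x : ℝ) (hx : x ∈ betaCyl β w) :
    ∃ y ∈ betaCyl β w, x < y := by
  rw [mem_cyl_iff] at hx
  have hne : (Finset.range (w.length+1)).Nonempty := ⟨0, by simp⟩
  set δ := (Finset.range (w.length+1)).inf' hne
      (fun k => 1 - (β ^ k * x - V β (w.take k))) with hδ
  have hδpos : 0 < δ := by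
    rw [hδ, Finset.lt_inf'_iff]
    intro k hk
    have hk' : k ≤ w.length := by simpa [Nat.lt_succ_iff] using Finset.mem_range.mp hk
    linarith [(hx k hk').2]
  have hbn : (0:ℝ) < β ^ w.length := by positivity
  have hdpos : 0 < δ / (2 * β ^ w.length) := by positivity
  refine ⟨x + δ / (2 * β ^ w.length), ?_, by linarith⟩
  rw [mem_cyl_iff]
  intro k hk
  have h1 := hx k hk
  have hδk : δ ≤ 1 - (β ^ k * x - V β (w.take k)) :=
    Finset.inf'_le _ (Finset.mem_range.mpr (by omega))
  have hkn : β ^ k ≤ β ^ w.length := pow_le_pow_right₀ hβ.le hk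
  have hbk : (0:ℝ) < β ^ k := by positivity
  have hkey : β ^ k * (δ / (2 * β ^ w.length)) ≤ δ / 2 := by
    rw [mul_div_assoc', div_le_div_iff₀ (by positivity) (by norm_num)]
    nlinarith [mul_le_mul_of_nonneg_right hkn hδpos.le]
  have hexp : β ^ k * (x + δ / (2 * β ^ w.length))
      = β ^ k * x + β ^ k * (δ / (2 * β ^ w.length)) := by ring
  constructor
  · rw [hexp]; nlinarith [h1.1, mul_pos hbk hdpos]
  · rw [hexp]; linarith [h1.2]

lemma V_append_replicate (β : ℝ) (w : List ℤ) (j : ℕ) :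
    V β (w ++ List.replicate j 0) = β ^ j * V β w := by
  induction j with
  | zero => simp
  | succ j ih =>
    rw [List.replicate_succ', ← List.append_assoc, V_concat, ih]
    push_cast
    ring

lemma mem_append_zeros_iff (β : ℝ) (hβ : 1 < β) (w : List ℤ) (l : ℕ) (x : ℝ) :
    x ∈ betaCyl β (w ++ List.replicate l 0) ↔
      x ∈ betaCyl β w ∧ β ^ (w.length + l) * x - β ^ l * V β w < 1 := by
  rw [mem_cyl_iff, mem_cyl_iff]
  have hlen : (w ++ List.replicate l 0).length = w.length + l := by simp
  have htake : ∀ j ≤ l, (w ++ List.replicate l 0).take (w.length + j)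
      = w ++ List.replicate j 0 := by
    intro j hj
    rw [List.take_append, List.take_replicate]
    congr 1
    all_goals simp [Nat.min_def, hj]
  constructor
  · intro H
    have hw' : ∀ k ≤ w.length, β ^ k * x - V β (w.take k) ∈ Ico (0:ℝ) 1 := by
      intro k hk
      have := H k (by omega)
      rwa [List.take_append_of_le_length hk] at this
    refine ⟨hw', ?_⟩
    have := H (w.length + l) (by omega)
    rw [htake l le_rfl, V_append_replicate] at this
    exact this.2
  · rintro ⟨H1, H2⟩ k hk
    rw [hlen] at hk
    by_cases hkn : k ≤ w.length
    · rw [List.take_append_of_le_length hkn]; exact H1 k hkn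
    · obtain ⟨j, rfl, hj⟩ : ∃ j, k = w.length + j ∧ j ≤ l := ⟨k - w.length, by omega, by omega⟩
      rw [htake j hj, V_append_replicate]
      have h0 := H1 w.length le_rfl
      rw [List.take_length] at h0
      have hjl : β ^ j ≤ β ^ l := pow_le_pow_right₀ hβ.le hj
      have hbj : (0:ℝ) < β ^ j := by positivity
      have e1 : β ^ (w.length + j) * x - β ^ j * V β w
          = β ^ j * (β ^ w.length * x - V β w) := by rw [pow_add]; ring
      have e2 : β ^ (w.length + l) * x - β ^ l * V β w
          = β ^ l * (β ^ w.length * x - V β w) := by rw [pow_add]; ring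
      rw [e1]
      rw [e2] at H2
      constructor
      · exact mul_nonneg hbj.le h0.1
      · calc β ^ j * (β ^ w.length * x - V β w)
            ≤ β ^ l * (β ^ w.length * x - V β w) :=
              mul_le_mul_of_nonneg_right hjl h0.1
          _ < 1 := H2

end BetaAux

/-- for `β ∈ (1,2)` with terminating expansion of `1` and any nonempty
cylinder `C_{x₀…x_{n-1}}`, there is `l ≥ 0` such that appending `0^l` does not change
the cylinder, appending `0^{l+1}` yields an affine copy of `[0,1)` scaled by
`β^{-(n+l+1)}`, and this copy has length at least `|C_{x₀…x_{n-1}}|/β`. -/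
theorem betaCyl_scaled_copy (β : ℝ) (hβ1 : 1 < β) (hβ2 : β < 2)
    (hterm : TerminatesAtOne β)
    (w : List ℤ) (hw : (betaCyl β w).Nonempty) :
    ∃ l : ℕ,
      betaCyl β w = betaCyl β (w ++ List.replicate l 0) ∧
      (∃ a : ℝ, betaCyl β (w ++ List.replicate (l + 1) 0) =
        (fun x => a + β ^ (-((w.length + l + 1 : ℕ) : ℤ)) * x) '' Ico (0:ℝ) 1) ∧
      volume (betaCyl β w) ≤ ENNReal.ofReal β * volume (betaCyl β (w ++ List.replicate (l + 1) 0)) := by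
  classical
  obtain ⟨x₀, hx₀⟩ := hw
  have hβ0 : (0:ℝ) < β := by linarith
  have hpos := BetaAux.digits_nonneg β hβ1 w ⟨x₀, hx₀⟩
  set a : ℝ := BetaAux.V β w / β ^ w.length with ha
  have hbn : (0:ℝ) < β ^ w.length := by positivity
  have hmem_bounds : ∀ x ∈ betaCyl β w, a ≤ x ∧ x < a + (β ^ w.length)⁻¹ := by
    intro x hx
    have h := (BetaAux.mem_cyl_iff β w x).mp hx w.length le_rfl
    rw [List.take_length] at h
    constructor
    · rw [ha, div_le_iff₀ hbn, mul_comm]; linarith [h.1]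
    · have e : a + (β ^ w.length)⁻¹ = (BetaAux.V β w + 1) / β ^ w.length := by
        rw [ha]; field_simp
      rw [e, lt_div_iff₀ hbn, mul_comm]; linarith [h.2]
  have hbdd : BddAbove (betaCyl β w) :=
    ⟨a + (β ^ w.length)⁻¹, fun x hx => (hmem_bounds x hx).2.le⟩
  set B := sSup (betaCyl β w) with hB
  have hxB : ∀ x ∈ betaCyl β w, x < B := by
    intro x hx
    obtain ⟨y, hy, hxy⟩ := BetaAux.exists_gt β hβ1 w x hx
    exact lt_of_lt_of_le hxy (le_csSup hbdd hy)
  have haB : a < B := lt_of_le_of_lt (hmem_bounds x₀ hx₀).1 (hxB x₀ hx₀)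
  have hBle : B ≤ a + (β ^ w.length)⁻¹ :=
    csSup_le ⟨x₀, hx₀⟩ (fun x hx => (hmem_bounds x hx).2.le)
  set r := B - a with hr
  have hr0 : 0 < r := by simp only [hr]; linarith
  have hrn : r ≤ (β ^ w.length)⁻¹ := by simp only [hr]; linarith
  have hex : ∃ m : ℕ, (β ^ (w.length + m + 1))⁻¹ < r := by
    obtain ⟨m, hm⟩ := pow_unbounded_of_one_lt r⁻¹ hβ1
    refine ⟨m, ?_⟩
    have h1 : r⁻¹ < β ^ (w.length + m + 1) :=
      lt_of_lt_of_le hm (pow_le_pow_right₀ hβ1.le (by omega))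
    have := inv_strictAnti₀ (by positivity) h1
    rwa [inv_inv] at this
  set l := Nat.find hex with hl
  have hl1 : (β ^ (w.length + l + 1))⁻¹ < r := Nat.find_spec hex
  have hl2 : r ≤ (β ^ (w.length + l))⁻¹ := by
    rcases Nat.eq_zero_or_pos l with h0 | h0
    · rw [h0, add_zero]; exact hrn
    · have hmin := Nat.find_min hex (show l - 1 < l from by omega)
      rw [show w.length + (l-1) + 1 = w.length + l from by omega] at hmin
      linarith [not_lt.mp hmin]
  have hCw : betaCyl β w = Ico a B := by
    ext x
    constructor
    · intro hx
      exact ⟨(hmem_bounds x hx).1, hxB x hx⟩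
    · rintro ⟨h1, h2⟩
      obtain ⟨z, hz, hxz⟩ := exists_lt_of_lt_csSup ⟨x₀, hx₀⟩ h2
      exact BetaAux.mem_of_le β hβ1 w hpos z x hz h1 hxz.le
  have hkey : ∀ (m : ℕ) (x : ℝ),
      β ^ (w.length + m) * x - β ^ m * BetaAux.V β w = β ^ (w.length + m) * (x - a) := by
    intro m x
    rw [ha, pow_add]
    field_simp
  have hclause1 : betaCyl β w = betaCyl β (w ++ List.replicate l 0) := by
    ext x
    rw [BetaAux.mem_append_zeros_iff β hβ1 w l x]
    constructor
    · intro hx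
      refine ⟨hx, ?_⟩
      rw [hkey]
      have hbnl : (0:ℝ) < β ^ (w.length + l) := by positivity
      have hxa : x - a < (β ^ (w.length + l))⁻¹ := by
        have := hxB x hx
        simp only [hr] at hl2
        linarith
      calc β ^ (w.length + l) * (x - a)
          < β ^ (w.length + l) * (β ^ (w.length + l))⁻¹ :=
            mul_lt_mul_of_pos_left hxa hbnl
        _ = 1 := mul_inv_cancel₀ (ne_of_gt hbnl)
    · exact fun h => h.1
  have hclause2 : betaCyl β (w ++ List.replicate (l + 1) 0)
      = Ico a (a + (β ^ (w.length + l + 1))⁻¹) := by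
    have hbnl : (0:ℝ) < β ^ (w.length + l + 1) := by positivity
    ext x
    rw [BetaAux.mem_append_zeros_iff β hβ1 w (l+1) x, hCw, hkey (l+1) x,
        show w.length + (l + 1) = w.length + l + 1 from rfl]
    constructor
    · rintro ⟨⟨h1, _⟩, h3⟩
      refine ⟨h1, ?_⟩
      have : x - a < (β ^ (w.length + l + 1))⁻¹ := by
        rw [← mul_lt_mul_iff_right₀ hbnl, mul_inv_cancel₀ (ne_of_gt hbnl)]
        exact h3
      linarith
    · rintro ⟨h1, h2⟩
      have hxa : x - a < (β ^ (w.length + l + 1))⁻¹ := by linarith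
      have hxB' : x < B := by
        simp only [hr] at hl1
        linarith
      refine ⟨⟨h1, hxB'⟩, ?_⟩
      calc β ^ (w.length + l + 1) * (x - a)
          < β ^ (w.length + l + 1) * (β ^ (w.length + l + 1))⁻¹ :=
            mul_lt_mul_of_pos_left hxa hbnl
        _ = 1 := mul_inv_cancel₀ (ne_of_gt hbnl)
  have hzpow : β ^ (-((w.length + l + 1 : ℕ) : ℤ)) = (β ^ (w.length + l + 1) : ℝ)⁻¹ := by
    rw [zpow_neg, zpow_natCast]
  refine ⟨l, hclause1, ⟨a, ?_⟩, ?_⟩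
  · rw [hclause2]
    have hc : (0:ℝ) < (β ^ (w.length + l + 1))⁻¹ := by positivity
    ext y
    simp only [mem_image, mem_Ico, hzpow]
    constructor
    · rintro ⟨h1, h2⟩
      refine ⟨(y - a) * β ^ (w.length + l + 1), ⟨?_, ?_⟩, ?_⟩
      · have : 0 ≤ y - a := by linarith
        positivity
      · rw [← lt_div_iff₀ (by positivity : (0:ℝ) < β ^ (w.length + l + 1))]
        rw [div_eq_mul_inv, one_mul]  -- 1 / c = c⁻¹? careful
        linarith
      · field_simp
        ring
    · rintro ⟨x, ⟨hx1, hx2⟩, rfl⟩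
      constructor
      · nlinarith
      · have : (β ^ (w.length + l + 1))⁻¹ * x < (β ^ (w.length + l + 1))⁻¹ * 1 :=
          mul_lt_mul_of_pos_left hx2 hc
        linarith
  · have hvol2 : volume (betaCyl β (w ++ List.replicate (l+1) 0))
        = ENNReal.ofReal ((β ^ (w.length + l + 1))⁻¹) := by
      rw [hclause2, Real.volume_Ico, add_sub_cancel_left]
    have hvol1 : volume (betaCyl β w) ≤ ENNReal.ofReal ((β ^ (w.length + l))⁻¹) := by
      rw [hCw, Real.volume_Ico]
      exact ENNReal.ofReal_le_ofReal (by simp only [hr] at hl2; linarith)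
    rw [hvol2, ← ENNReal.ofReal_mul hβ0.le]
    refine le_trans hvol1 (ENNReal.ofReal_le_ofReal ?_)
    have hβne : β ≠ 0 := ne_of_gt hβ0
    have : β * (β ^ (w.length + l + 1))⁻¹ = (β ^ (w.length + l))⁻¹ := by
      rw [pow_succ, mul_inv, ← mul_assoc, mul_comm β, mul_assoc,
        mul_inv_cancel₀ hβne, mul_one]
    linarith [this.ge]
end
end
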